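/- If f₀ is continuous at a point u ∈ ℝ, then f_n(u) → f₀(u) as n → ∞. -/

import Mathlib

open MeasureTheory Filter Topology
open scoped ENNReal NNReal

namespace KDEaux


noncomputable def g (x : ℝ) : ℝ := (Real.sqrt (2 * Real.pi))⁻¹ * Real.exp (-x ^ 2 / 2)

lemma g_eq_gaussian : g = ProbabilityTheory.gaussianPDFReal 0 1 := by
  funext x
  simp [g, ProbabilityTheory.gaussianPDFReal]

lemma g_nonneg (x : ℝ) : 0 ≤ g x := by
  rw [g_eq_gaussian]; exact ProbabilityTheory.gaussianPDFReal_nonneg 0 1 x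

lemma g_continuous : Continuous g := by
  unfold g; continuity

lemma g_integrable : Integrable g := by
  rw [g_eq_gaussian]; exact ProbabilityTheory.integrable_gaussianPDFReal 0 1

lemma g_integral : ∫ x, g x = 1 := by
  rw [g_eq_gaussian]
  exact ProbabilityTheory.integral_gaussianPDFReal_eq_one 0 one_ne_zero

lemma hasDerivAt_g (x : ℝ) : HasDerivAt g (-x * g x) x := by
  have h1 : HasDerivAt (fun y : ℝ => -y ^ 2 / 2) (-x) x := by
    have h := ((hasDerivAt_pow 2 x).neg).div_const 2
    refine h.congr_deriv ?_
    norm_num; ring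
  have h2 := (h1.exp).const_mul (Real.sqrt (2 * Real.pi))⁻¹
  refine h2.congr_deriv ?_
  unfold g; ring

lemma tendsto_g_atTop : Tendsto g atTop (𝓝 0) := by
  have h1 : Tendsto (fun x : ℝ => -x ^ 2 / 2) atTop atBot := by
    apply Tendsto.atBot_div_const (by norm_num)
    have h0 : Tendsto (fun x : ℝ => -x) atTop atBot := tendsto_neg_atTop_atBot
    exact h0.comp (tendsto_pow_atTop two_ne_zero)
  have h := (Real.tendsto_exp_atBot.comp h1).const_mul (Real.sqrt (2 * Real.pi))⁻¹
  unfold g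
  simpa only [Function.comp_def, mul_zero] using h

lemma tendsto_g_atBot : Tendsto g atBot (𝓝 0) := by
  have h1 : Tendsto (fun x : ℝ => -x ^ 2 / 2) atBot atBot := by
    apply Tendsto.atBot_div_const (by norm_num)
    have h2 : Tendsto (fun x : ℝ => x ^ 2) atBot atTop := by
      have hn : Tendsto (fun x : ℝ => -x) atBot atTop := tendsto_neg_atBot_atTop
      have := (tendsto_pow_atTop (two_ne_zero)).comp hn
      simpa [Function.comp_def, neg_sq] using this
    exact tendsto_neg_atTop_atBot.comp h2
  have h := (Real.tendsto_exp_atBot.comp h1).const_mul (Real.sqrt (2 * Real.pi))⁻¹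
  unfold g
  simpa only [Function.comp_def, mul_zero] using h

lemma integrable_id_mul_g : Integrable (fun x => x * g x) := by
  have h : Integrable (fun x : ℝ => x * Real.exp (-(1/2 : ℝ) * x ^ 2)) :=
    integrable_mul_exp_neg_mul_sq (by norm_num)
  have h2 := h.const_mul (Real.sqrt (2 * Real.pi))⁻¹
  have : (fun x => x * g x)
      = fun x : ℝ => (Real.sqrt (2 * Real.pi))⁻¹ * (x * Real.exp (-(1/2 : ℝ) * x ^ 2)) := by
    funext x
    rw [g, show -x ^ 2 / 2 = -(1/2 : ℝ) * x ^ 2 by ring]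
    ring
  rw [this]; exact h2

lemma integrable_abs_mul_g : Integrable (fun x => |x| * g x) := by
  have := integrable_id_mul_g.abs
  apply this.congr
  filter_upwards with x
  rw [abs_mul, abs_of_nonneg (g_nonneg x)]

noncomputable def K : ℝ := ∫ x, |x| * g x

lemma K_nonneg : 0 ≤ K :=
  integral_nonneg fun x => mul_nonneg (abs_nonneg x) (g_nonneg x)



noncomputable def psi (η u s : ℝ) : ℝ := η⁻¹ * g ((u - s) / η)

noncomputable def Dk (η u s : ℝ) : ℝ := (η ^ 3)⁻¹ * ((u - s) * g ((u - s) / η))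

variable {η : ℝ} (u : ℝ)

lemma psi_nonneg (hη : 0 < η) (s : ℝ) : 0 ≤ psi η u s :=
  mul_nonneg (inv_nonneg.2 hη.le) (g_nonneg _)

lemma continuous_psi (hη : η ≠ 0) : Continuous (psi η u) := by
  apply Continuous.mul continuous_const
  exact g_continuous.comp (by fun_prop)

lemma continuous_Dk : Continuous (Dk η u) := by
  apply Continuous.mul continuous_const
  apply Continuous.mul (by fun_prop)
  exact g_continuous.comp (by fun_prop)

lemma hasDerivAt_psi (hη : η ≠ 0) (s : ℝ) : HasDerivAt (psi η u) (Dk η u s) s := by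
  have ha : HasDerivAt (fun s : ℝ => (u - s) / η) (-1 / η) s := by
    have := ((hasDerivAt_id s).const_sub u).div_const η
    simpa using this
  have hg := (hasDerivAt_g ((u - s) / η)).comp s ha
  have h := hg.const_mul η⁻¹
  refine h.congr_deriv ?_
  unfold Dk
  field_simp

lemma integrable_psi (hη : 0 < η) : Integrable (psi η u) := by
  unfold psi
  apply Integrable.const_mul
  have h1 : Integrable (fun y : ℝ => g (y / η)) := g_integrable.comp_div hη.ne'
  simpa using h1.comp_sub_left u

lemma integral_psi (hη : 0 < η) : ∫ s, psi η u s = 1 := by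
  unfold psi
  rw [integral_const_mul]
  have h1 : (∫ s : ℝ, g ((u - s) / η)) = ∫ y : ℝ, g (y / η) :=
    integral_sub_left_eq_self (fun y : ℝ => g (y / η)) volume u
  rw [h1, Measure.integral_comp_div (fun y : ℝ => g y) η, g_integral, abs_of_pos hη]
  simp [smul_eq_mul, inv_mul_cancel₀ hη.ne']

lemma integrable_Dk (hη : 0 < η) : Integrable (Dk η u) := by
  have h0 : Integrable (fun y : ℝ => y / η * g (y / η)) :=
    (integrable_id_mul_g.comp_div hη.ne')
  have h1 : Integrable (fun s : ℝ => (u - s) / η * g ((u - s) / η)) := h0.comp_sub_left u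
  have heq : Dk η u = fun s : ℝ => (η ^ 2)⁻¹ * ((u - s) / η * g ((u - s) / η)) := by
    funext s
    unfold Dk
    rw [show ((η:ℝ) ^ 3)⁻¹ = (η ^ 2)⁻¹ * η⁻¹ by rw [pow_succ, mul_inv]]
    ring
  rw [heq]
  exact h1.const_mul _


lemma tendsto_psi_atTop (hη : 0 < η) : Tendsto (psi η u) atTop (𝓝 0) := by
  unfold psi
  have ha : Tendsto (fun s : ℝ => (u - s) / η) atTop atBot := by
    apply Tendsto.atBot_div_const hη
    have : Tendsto (fun s : ℝ => u + -s) atTop atBot :=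
      tendsto_atBot_add_const_left _ u tendsto_neg_atTop_atBot
    simpa [← sub_eq_add_neg] using this
  have := (tendsto_g_atBot.comp ha).const_mul η⁻¹
  simpa [Function.comp_def] using this

lemma tendsto_psi_atBot (hη : 0 < η) : Tendsto (psi η u) atBot (𝓝 0) := by
  unfold psi
  have ha : Tendsto (fun s : ℝ => (u - s) / η) atBot atTop := by
    apply Tendsto.atTop_div_const hη
    have : Tendsto (fun s : ℝ => u + -s) atBot atTop :=
      tendsto_atTop_add_const_left _ u tendsto_neg_atBot_atTop
    simpa [← sub_eq_add_neg] using this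
  have := (tendsto_g_atTop.comp ha).const_mul η⁻¹
  simpa [Function.comp_def] using this

lemma integral_Dk (hη : 0 < η) : ∫ s, Dk η u s = 0 := by
  have h := MeasureTheory.integral_of_hasDerivAt_of_tendsto
    (hasDerivAt_psi u hη.ne') (integrable_Dk u hη) (tendsto_psi_atBot u hη)
    (tendsto_psi_atTop u hη)
  simpa using h

lemma psi_eq_integral_Ici (hη : 0 < η) (t : ℝ) :
    psi η u t = ∫ s in Set.Ici t, -Dk η u s := by
  have h := MeasureTheory.integral_Ioi_of_hasDerivAt_of_tendsto'
    (f := psi η u) (f' := Dk η u) (a := t)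
    (fun x _ => hasDerivAt_psi u hη.ne' x) ((integrable_Dk u hη).integrableOn)
    (tendsto_psi_atTop u hη)
  rw [MeasureTheory.integral_Ici_eq_integral_Ioi, integral_neg, h]
  ring

lemma integral_weight (hη : 0 < η) :
    ∫ t, η⁻¹ * (|u - t| * g ((u - t) / η)) = η * K := by
  have h1 : (∫ t : ℝ, η⁻¹ * (|u - t| * g ((u - t) / η)))
      = ∫ y : ℝ, η⁻¹ * (|y| * g (y / η)) :=
    integral_sub_left_eq_self (fun y : ℝ => η⁻¹ * (|y| * g (y / η))) volume u
  have h2 : (fun y : ℝ => η⁻¹ * (|y| * g (y / η))) = fun y : ℝ => |y / η| * g (y / η) := by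
    funext y
    rw [abs_div, abs_of_pos hη]
    ring
  rw [h1, h2, Measure.integral_comp_div (fun x : ℝ => |x| * g x) η, abs_of_pos hη]
  rfl

lemma integral_abs_Dk (hη : 0 < η) : ∫ s, |Dk η u s| = K / η := by
  have h2 : (fun s : ℝ => |Dk η u s|)
      = fun s : ℝ => (η ^ 2)⁻¹ * (η⁻¹ * (|u - s| * g ((u - s) / η))) := by
    funext s
    unfold Dk
    rw [abs_mul, abs_mul, abs_of_nonneg (g_nonneg _), abs_inv, abs_pow, abs_of_pos hη,
      show ((η:ℝ) ^ 3)⁻¹ = (η ^ 2)⁻¹ * η⁻¹ by rw [pow_succ, mul_inv]]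
    ring
  rw [h2, integral_const_mul, integral_weight u hη]
  field_simp


lemma integral_psi_measure (μ : Measure ℝ) [IsFiniteMeasure μ] (hη : 0 < η) :
    ∫ t, psi η u t ∂μ = ∫ s, (μ (Set.Iic s)).toReal * (-Dk η u s) := by
  set Φ : ℝ × ℝ → ℝ :=
    Set.indicator {q : ℝ × ℝ | q.1 ≤ q.2} (fun q => -Dk η u q.2) with hΦ
  have hmeas_set : MeasurableSet {q : ℝ × ℝ | q.1 ≤ q.2} :=
    measurableSet_le measurable_fst measurable_snd
  have hΦmeas : AEStronglyMeasurable Φ (μ.prod volume) :=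
    (((continuous_Dk u).neg.comp continuous_snd).aestronglyMeasurable).indicator hmeas_set
  have hdom : Integrable (fun q : ℝ × ℝ => Dk η u q.2) (μ.prod volume) := by
    have := (integrable_const (μ := μ) (1 : ℝ)).mul_prod (integrable_Dk u hη)
    simpa using this
  have hΦint : Integrable Φ (μ.prod volume) := by
    refine hdom.abs.mono' hΦmeas ?_
    filter_upwards with q
    refine (norm_indicator_le_norm_self _ q).trans ?_
    simp
  have hswap := integral_integral_swap (μ := μ) (ν := volume)
    (f := fun t s => Φ (t, s)) hΦint
  have hL : ∀ t : ℝ, (∫ s, Φ (t, s)) = psi η u t := by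
    intro t
    have h1 : (fun s => Φ (t, s)) = (Set.Ici t).indicator (fun s => -Dk η u s) := by
      funext s
      by_cases h : t ≤ s <;>
        simp [hΦ, Set.indicator_apply, Set.mem_setOf_eq, Set.mem_Ici, h]
    rw [h1, integral_indicator measurableSet_Ici]
    exact (psi_eq_integral_Ici u hη t).symm
  have hR : ∀ s : ℝ, (∫ t, Φ (t, s) ∂μ) = (μ (Set.Iic s)).toReal * (-Dk η u s) := by
    intro s
    have h1 : (fun t => Φ (t, s)) = (Set.Iic s).indicator (fun _ => -Dk η u s) := by
      funext t
      by_cases h : t ≤ s <;>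
        simp [hΦ, Set.indicator_apply, Set.mem_setOf_eq, Set.mem_Iic, h]
    rw [h1, integral_indicator_const _ measurableSet_Iic, smul_eq_mul, measureReal_def]
  calc ∫ t, psi η u t ∂μ = ∫ t, (∫ s, Φ (t, s)) ∂μ := by
        refine integral_congr_ae ?_
        filter_upwards with t
        rw [hL t]
    _ = ∫ s, (∫ t, Φ (t, s) ∂μ) := hswap
    _ = ∫ s, (μ (Set.Iic s)).toReal * (-Dk η u s) := by
        refine integral_congr_ae ?_
        filter_upwards with s
        rw [hR s]


lemma stieltjes_repr (f : StieltjesFunction ℝ) (C : ℝ) (hC : ∀ t, |f t| ≤ C) (hη : 0 < η) :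
    ∫ t, psi η u t ∂f.measure = ∫ s, f s * (-Dk η u s) := by
  have hbdd_below : BddBelow (Set.range f) :=
    ⟨-C, by rintro _ ⟨t, rfl⟩; exact neg_le_of_abs_le (hC t)⟩
  have hbdd_above : BddAbove (Set.range f) :=
    ⟨C, by rintro _ ⟨t, rfl⟩; exact le_of_abs_le (hC t)⟩
  have hbot : Tendsto f atBot (𝓝 (⨅ t, f t)) := tendsto_atBot_ciInf f.mono hbdd_below
  have htop : Tendsto f atTop (𝓝 (⨆ t, f t)) := tendsto_atTop_ciSup f.mono hbdd_above
  haveI : IsFiniteMeasure f.measure := f.isFiniteMeasure hbot htop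
  set l := ⨅ t, f t with hl
  have hIic : ∀ s : ℝ, (f.measure (Set.Iic s)).toReal = f s - l := by
    intro s
    rw [f.measure_Iic hbot s, ENNReal.toReal_ofReal]
    have : l ≤ f s := ciInf_le hbdd_below s
    linarith
  rw [integral_psi_measure u f.measure hη]
  have hint1 : Integrable (fun s => f s * (-Dk η u s)) := by
    refine ((integrable_Dk u hη).neg).bdd_mul ?_ (Filter.Eventually.of_forall fun s => hC s)
    exact (f.mono.measurable).aestronglyMeasurable
  have hint2 : Integrable (fun s => l * (-Dk η u s)) :=
    ((integrable_Dk u hη).neg).const_mul l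
  calc ∫ s, (f.measure (Set.Iic s)).toReal * (-Dk η u s)
      = ∫ s, (f s * (-Dk η u s) - l * (-Dk η u s)) := by
        refine integral_congr_ae ?_
        filter_upwards with s
        rw [hIic s]; ring
    _ = (∫ s, f s * (-Dk η u s)) - ∫ s, l * (-Dk η u s) := integral_sub hint1 hint2
    _ = ∫ s, f s * (-Dk η u s) := by
        rw [integral_const_mul, integral_neg, integral_Dk u hη]
        simp

lemma density_repr (f₀ : ℝ → ℝ) (hnn : ∀ x, 0 ≤ f₀ x) (hint : Integrable f₀) (hη : 0 < η) :
    ∫ t, f₀ t * psi η u t = ∫ s, (∫ x in Set.Iic s, f₀ x) * (-Dk η u s) := by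
  set μ₀ : Measure ℝ := volume.withDensity (fun x => ENNReal.ofReal (f₀ x)) with hμ₀
  have hcoe : (fun x => ((f₀ x).toNNReal : ℝ≥0∞)) = fun x => ENNReal.ofReal (f₀ x) := rfl
  haveI : IsFiniteMeasure μ₀ := by
    constructor
    rw [hμ₀, withDensity_apply _ MeasurableSet.univ, Measure.restrict_univ,
      ← ofReal_integral_eq_lintegral_ofReal hint (Filter.Eventually.of_forall hnn)]
    exact ENNReal.ofReal_lt_top
  have h1 : ∫ t, psi η u t ∂μ₀ = ∫ t, f₀ t * psi η u t := by
    rw [hμ₀, ← hcoe,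
      integral_withDensity_eq_integral_smul₀ (hint.aemeasurable.real_toNNReal) _]
    refine integral_congr_ae (Filter.Eventually.of_forall fun t => ?_)
    simp only [NNReal.smul_def, Real.coe_toNNReal _ (hnn t), smul_eq_mul]
  have hIic : ∀ s : ℝ, (μ₀ (Set.Iic s)).toReal = ∫ x in Set.Iic s, f₀ x := by
    intro s
    rw [hμ₀, withDensity_apply _ measurableSet_Iic,
      ← ofReal_integral_eq_lintegral_ofReal hint.integrableOn
        (ae_restrict_of_ae (Filter.Eventually.of_forall hnn)),
      ENNReal.toReal_ofReal (setIntegral_nonneg measurableSet_Iic fun x _ => hnn x)]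
  rw [← h1, integral_psi_measure u μ₀ hη]
  refine integral_congr_ae (Filter.Eventually.of_forall fun s => ?_)
  simp only [hIic s]


lemma integrable_weight (hη : 0 < η) :
    Integrable (fun t => η⁻¹ * (|u - t| * g ((u - t) / η))) := by
  have h0 : Integrable (fun y : ℝ => |y / η| * g (y / η)) :=
    integrable_abs_mul_g.comp_div hη.ne'
  have h1 := h0.comp_sub_left u
  have heq : (fun t : ℝ => η⁻¹ * (|u - t| * g ((u - t) / η)))
      = fun t : ℝ => |(u - t) / η| * g ((u - t) / η) := by
    funext t
    rw [abs_div, abs_of_pos hη]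
    ring
  rw [heq]
  exact h1

lemma tendsto_conv (f₀ : ℝ → ℝ) (hnn : ∀ x, 0 ≤ f₀ x) (M : ℝ) (hbdd : ∀ x, f₀ x ≤ M)
    (hmeas : AEStronglyMeasurable f₀ volume) (η : ℕ → ℝ) (hηpos : ∀ n, 0 < η n)
    (hη0 : Tendsto η atTop (𝓝 0)) (u : ℝ) (hcont : ContinuousAt f₀ u) :
    Tendsto (fun n => ∫ t, f₀ t * psi (η n) u t) atTop (𝓝 (f₀ u)) := by
  have hM : 0 ≤ M := (hnn u).trans (hbdd u)
  have hK := K_nonneg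
  rw [Metric.tendsto_atTop]
  intro ε hε
  obtain ⟨δ, hδpos, hδ⟩ := Metric.continuousAt_iff.1 hcont (ε / 2) (half_pos hε)
  set c : ℝ := ε * δ / (4 * (M * K + 1)) with hc
  have hcpos : 0 < c := by positivity
  have hev : ∀ᶠ n in atTop, dist (η n) 0 < c := (Metric.tendsto_nhds.1 hη0) c hcpos
  obtain ⟨N, hN⟩ := eventually_atTop.1 hev
  refine ⟨N, fun n hn => ?_⟩
  have hηn : 0 < η n := hηpos n
  have hηc : η n < c := by
    have := hN n hn
    rwa [Real.dist_eq, sub_zero, abs_of_pos hηn] at this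
  set η' := η n with hη'
  -- integrability facts
  have hψint : Integrable (psi η' u) := integrable_psi u hηn
  have hfψ : Integrable (fun t => f₀ t * psi η' u t) := by
    refine hψint.bdd_mul (c := M) hmeas (Filter.Eventually.of_forall fun t => ?_)
    rw [Real.norm_eq_abs, abs_of_nonneg (hnn t)]
    exact hbdd t
  have hcψ : Integrable (fun t => f₀ u * psi η' u t) := hψint.const_mul (f₀ u)
  have hdiffint : Integrable (fun t => (f₀ t - f₀ u) * psi η' u t) := by
    have := hfψ.sub hcψ
    refine this.congr (Filter.Eventually.of_forall fun t => ?_)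
    simp only [Pi.sub_apply]
    ring
  -- rewrite difference
  have hrepr : (∫ t, (f₀ t - f₀ u) * psi η' u t)
      = (∫ t, f₀ t * psi η' u t) - f₀ u := by
    have h1 : (fun t => (f₀ t - f₀ u) * psi η' u t)
        = fun t => f₀ t * psi η' u t - f₀ u * psi η' u t := by
      funext t; ring
    rw [h1, integral_sub hfψ hcψ, integral_const_mul, integral_psi u hηn, mul_one]
  set S := Metric.ball u δ with hS
  have hsplit : (∫ t, (f₀ t - f₀ u) * psi η' u t)
      = (∫ t in S, (f₀ t - f₀ u) * psi η' u t)
        + ∫ t in Sᶜ, (f₀ t - f₀ u) * psi η' u t :=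
    (integral_add_compl measurableSet_ball hdiffint).symm
  -- bound on the ball
  have hb1 : |∫ t in S, (f₀ t - f₀ u) * psi η' u t| ≤ ε / 2 := by
    have h1 : |∫ t in S, (f₀ t - f₀ u) * psi η' u t|
        ≤ ∫ t in S, |(f₀ t - f₀ u) * psi η' u t| := by
      simpa only [Real.norm_eq_abs] using
        norm_integral_le_integral_norm (μ := volume.restrict S)
          (fun t => (f₀ t - f₀ u) * psi η' u t)
    have h2 : (∫ t in S, |(f₀ t - f₀ u) * psi η' u t|)
        ≤ ∫ t in S, (ε / 2) * psi η' u t := by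
      refine setIntegral_mono_on hdiffint.abs.integrableOn
        ((hψint.const_mul (ε / 2)).integrableOn) measurableSet_ball fun t ht => ?_
      rw [abs_mul, abs_of_nonneg (psi_nonneg u hηn t)]
      refine mul_le_mul_of_nonneg_right ?_ (psi_nonneg u hηn t)
      have := hδ (Metric.mem_ball.1 ht)
      rw [Real.dist_eq] at this
      exact this.le
    have h3 : (∫ t in S, (ε / 2) * psi η' u t) ≤ ε / 2 := by
      rw [integral_const_mul]
      have h4 : (∫ t in S, psi η' u t) ≤ ∫ t, psi η' u t :=
        setIntegral_le_integral hψint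
          (Filter.Eventually.of_forall fun t => psi_nonneg u hηn t)
      rw [integral_psi u hηn] at h4
      nlinarith
    linarith
  -- bound off the ball
  have hb2 : |∫ t in Sᶜ, (f₀ t - f₀ u) * psi η' u t| ≤ 2 * M / δ * (η' * K) := by
    have h1 : |∫ t in Sᶜ, (f₀ t - f₀ u) * psi η' u t|
        ≤ ∫ t in Sᶜ, |(f₀ t - f₀ u) * psi η' u t| := by
      simpa only [Real.norm_eq_abs] using
        norm_integral_le_integral_norm (μ := volume.restrict Sᶜ)
          (fun t => (f₀ t - f₀ u) * psi η' u t)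
    have h2 : (∫ t in Sᶜ, |(f₀ t - f₀ u) * psi η' u t|)
        ≤ ∫ t in Sᶜ, (2 * M / δ) * (η'⁻¹ * (|u - t| * g ((u - t) / η'))) := by
      refine setIntegral_mono_on hdiffint.abs.integrableOn
        (((integrable_weight u hηn).const_mul (2 * M / δ)).integrableOn)
        measurableSet_ball.compl fun t ht => ?_
      have hdist : δ ≤ |u - t| := by
        have h := Metric.mem_ball.not.1 ht
        rw [Real.dist_eq, not_lt] at h
        rwa [abs_sub_comm]
      have hΔ : |f₀ t - f₀ u| ≤ 2 * M := by
        have h1 := abs_sub_abs_le_abs_sub (f₀ t) (f₀ u)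
        have h2 : |f₀ t| ≤ M := by rw [abs_of_nonneg (hnn t)]; exact hbdd t
        have h3 : |f₀ u| ≤ M := by rw [abs_of_nonneg (hnn u)]; exact hbdd u
        calc |f₀ t - f₀ u| ≤ |f₀ t| + |f₀ u| := abs_sub _ _
          _ ≤ 2 * M := by linarith
      have hψle : psi η' u t ≤ δ⁻¹ * (η'⁻¹ * (|u - t| * g ((u - t) / η'))) := by
        unfold psi
        rw [show δ⁻¹ * (η'⁻¹ * (|u - t| * g ((u - t) / η')))
            = η'⁻¹ * ((δ⁻¹ * |u - t|) * g ((u - t) / η')) by ring]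
        refine mul_le_mul_of_nonneg_left ?_ (inv_nonneg.2 hηn.le)
        have h1 : (1 : ℝ) ≤ δ⁻¹ * |u - t| := by
          rw [← div_eq_inv_mul, le_div_iff₀ hδpos, one_mul]
          exact hdist
        nlinarith [g_nonneg ((u - t) / η')]
      rw [abs_mul, abs_of_nonneg (psi_nonneg u hηn t)]
      calc |f₀ t - f₀ u| * psi η' u t
          ≤ (2 * M) * (δ⁻¹ * (η'⁻¹ * (|u - t| * g ((u - t) / η')))) := by
            refine mul_le_mul hΔ hψle (psi_nonneg u hηn t) (by positivity)
        _ = (2 * M / δ) * (η'⁻¹ * (|u - t| * g ((u - t) / η'))) := by ring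
    have h3 : (∫ t in Sᶜ, (2 * M / δ) * (η'⁻¹ * (|u - t| * g ((u - t) / η'))))
        ≤ ∫ t, (2 * M / δ) * (η'⁻¹ * (|u - t| * g ((u - t) / η'))) := by
      refine setIntegral_le_integral ((integrable_weight u hηn).const_mul _)
        (Filter.Eventually.of_forall fun t => ?_)
      have := g_nonneg ((u - t) / η')
      positivity
    have h4 : (∫ t, (2 * M / δ) * (η'⁻¹ * (|u - t| * g ((u - t) / η'))))
        = 2 * M / δ * (η' * K) := by
      rw [integral_const_mul, integral_weight u hηn]
    linarith
  have hsmall : 2 * M / δ * (η' * K) < ε / 2 := by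
    have ha : (0:ℝ) ≤ M * K := mul_nonneg hM hK
    have h1 : 2 * M / δ * (η' * K) = 2 * (M * K) * (η' / δ) := by
      field_simp
    have h2 : η' / δ < c / δ := by gcongr
    rw [h1]
    set q := c / δ with hq
    have hqpos : 0 < q := div_pos hcpos hδpos
    have hδne : δ ≠ 0 := hδpos.ne'
    have hMK1 : M * K + 1 ≠ 0 := by positivity
    have hcd : 2 * (M * K) * q + 2 * q = ε / 2 := by
      rw [hq, hc]
      field_simp
      ring
    have h5 : 2 * (M * K) * (η' / δ) ≤ 2 * (M * K) * q :=
      mul_le_mul_of_nonneg_left h2.le (by positivity)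
    linarith
  have final : dist (∫ t, f₀ t * psi η' u t) (f₀ u) < ε := by
    rw [Real.dist_eq, ← hrepr, hsplit]
    calc |(∫ t in S, (f₀ t - f₀ u) * psi η' u t)
          + ∫ t in Sᶜ, (f₀ t - f₀ u) * psi η' u t|
        ≤ |∫ t in S, (f₀ t - f₀ u) * psi η' u t|
          + |∫ t in Sᶜ, (f₀ t - f₀ u) * psi η' u t| := abs_add_le _ _
      _ < ε := by linarith
  exact final

end KDEaux


/-- Kernel density estimation: if `F_n → F₀` uniformly at rate `ε_n` with bandwidths
`η_n → 0` and `ε_n/η_n → 0`, and `f₀` is continuous at `u`, then the Gaussian kernel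
density estimates satisfy `f_n(u) → f₀(u)`. -/
theorem kernel_density_estimate_tendsto_of_continuousAt
    (f₀ : ℝ → ℝ) (hf₀nn : ∀ x, 0 ≤ f₀ x)
    (M : ℝ) (hf₀bdd : ∀ x, f₀ x ≤ M)
    (hf₀int : Integrable f₀) (hf₀prob : ∫ x, f₀ x = 1)
    (F₀ : ℝ → ℝ) (hF₀ : ∀ t, F₀ t = ∫ s in Set.Iic t, f₀ s)
    (F : ℕ → StieltjesFunction ℝ)
    (hFbdd : ∀ n, ∃ C, ∀ t, |F n t| ≤ C)
    (η : ℕ → ℝ) (hηpos : ∀ n, 0 < η n)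
    (hη0 : Tendsto η atTop (𝓝 0))
    (hε : Tendsto (fun n => (⨆ t, |F n t - F₀ t|) / η n) atTop (𝓝 0))
    (φ : ℝ → ℝ) (hφ : ∀ x, φ x = (Real.sqrt (2 * Real.pi))⁻¹ * Real.exp (-x ^ 2 / 2))
    (fn : ℕ → ℝ → ℝ)
    (hfn : ∀ n u, fn n u = ∫ t, (η n)⁻¹ * φ ((u - t) / η n) ∂(F n).measure)
    (u : ℝ) (hcont : ContinuousAt f₀ u) :
    Tendsto (fun n => fn n u) atTop (𝓝 (f₀ u)) := by
  classical
  -- basic facts about F₀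
  have hF₀mono : Monotone F₀ := by
    intro a b hab
    rw [hF₀ a, hF₀ b]
    refine setIntegral_mono_set hf₀int.integrableOn
      (ae_restrict_of_ae (Filter.Eventually.of_forall hf₀nn)) ?_
    exact HasSubset.Subset.eventuallyLE (Set.Iic_subset_Iic.2 hab)
  have hF₀meas : Measurable F₀ := hF₀mono.measurable
  have hF₀nonneg : ∀ s, 0 ≤ F₀ s := fun s => by
    rw [hF₀ s]
    exact setIntegral_nonneg measurableSet_Iic fun x _ => hf₀nn x
  have hF₀le1 : ∀ s, F₀ s ≤ 1 := fun s => by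
    rw [hF₀ s, ← hf₀prob]
    exact setIntegral_le_integral hf₀int (Filter.Eventually.of_forall hf₀nn)
  -- the smoothed version of F n
  have hFnrepr : ∀ n, fn n u = ∫ s, F n s * (-KDEaux.Dk (η n) u s) := by
    intro n
    obtain ⟨C, hC⟩ := hFbdd n
    rw [hfn n u]
    rw [show (fun t => (η n)⁻¹ * φ ((u - t) / η n)) = KDEaux.psi (η n) u by
      funext t; rw [hφ]; rfl]
    exact KDEaux.stieltjes_repr u (F n) C hC (hηpos n)
  -- the smoothed version of F₀, i.e. the convolution with f₀
  set conv : ℕ → ℝ := fun n => ∫ t, f₀ t * KDEaux.psi (η n) u t with hconv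
  have hconvrepr : ∀ n, conv n = ∫ s, F₀ s * (-KDEaux.Dk (η n) u s) := by
    intro n
    rw [hconv]
    simp only
    rw [KDEaux.density_repr u f₀ hf₀nn hf₀int (hηpos n)]
    refine integral_congr_ae (Filter.Eventually.of_forall fun s => ?_)
    simp only
    rw [hF₀ s]
  -- uniform bound
  have hEbd : ∀ n s, |F n s - F₀ s| ≤ ⨆ t, |F n t - F₀ t| := by
    intro n s
    obtain ⟨C, hC⟩ := hFbdd n
    refine le_ciSup (f := fun t => |F n t - F₀ t|) ⟨C + 1, ?_⟩ s
    rintro _ ⟨t, rfl⟩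
    have h1 : |F₀ t| ≤ 1 := by
      rw [abs_of_nonneg (hF₀nonneg t)]; exact hF₀le1 t
    calc |F n t - F₀ t| ≤ |F n t| + |F₀ t| := abs_sub _ _
      _ ≤ C + 1 := add_le_add (hC t) h1
  have hEnn : ∀ n, 0 ≤ ⨆ t, |F n t - F₀ t| :=
    fun n => (abs_nonneg _).trans (hEbd n 0)
  -- bound on the difference between fn and conv
  have hdiffbd : ∀ n, |fn n u - conv n|
      ≤ KDEaux.K * ((⨆ t, |F n t - F₀ t|) / η n) := by
    intro n
    obtain ⟨C, hC⟩ := hFbdd n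
    have hηn := hηpos n
    have hint1 : Integrable (fun s => F n s * (-KDEaux.Dk (η n) u s)) := by
      refine ((KDEaux.integrable_Dk u hηn).neg).bdd_mul (c := C)
        ((F n).mono.measurable.aestronglyMeasurable) (Filter.Eventually.of_forall fun s => ?_)
      rw [Real.norm_eq_abs]; exact hC s
    have hint2 : Integrable (fun s => F₀ s * (-KDEaux.Dk (η n) u s)) := by
      refine ((KDEaux.integrable_Dk u hηn).neg).bdd_mul (c := 1)
        hF₀meas.aestronglyMeasurable (Filter.Eventually.of_forall fun s => ?_)
      rw [Real.norm_eq_abs, abs_of_nonneg (hF₀nonneg s)]; exact hF₀le1 s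
    rw [hFnrepr n, hconvrepr n, ← integral_sub hint1 hint2]
    have heq : (fun s => F n s * -KDEaux.Dk (η n) u s - F₀ s * -KDEaux.Dk (η n) u s)
        = fun s => (F n s - F₀ s) * -KDEaux.Dk (η n) u s := by
      funext s; ring
    rw [heq]
    have h1 : |∫ s, (F n s - F₀ s) * -KDEaux.Dk (η n) u s|
        ≤ ∫ s, |(F n s - F₀ s) * -KDEaux.Dk (η n) u s| := by
      simpa only [Real.norm_eq_abs] using
        norm_integral_le_integral_norm (fun s => (F n s - F₀ s) * -KDEaux.Dk (η n) u s)
    have hintabs : Integrable (fun s => |(F n s - F₀ s) * -KDEaux.Dk (η n) u s|) := by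
      have := (hint1.sub hint2).abs
      refine this.congr (Filter.Eventually.of_forall fun s => ?_)
      simp only [Pi.sub_apply]
      congr 1
      ring
    have h2 : (∫ s, |(F n s - F₀ s) * -KDEaux.Dk (η n) u s|)
        ≤ ∫ s, (⨆ t, |F n t - F₀ t|) * |KDEaux.Dk (η n) u s| := by
      refine integral_mono hintabs
        ((KDEaux.integrable_Dk u hηn).abs.const_mul _) fun s => ?_
      rw [abs_mul, abs_neg]
      exact mul_le_mul_of_nonneg_right (hEbd n s) (abs_nonneg _)
    have h3 : (∫ s, (⨆ t, |F n t - F₀ t|) * |KDEaux.Dk (η n) u s|)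
        = KDEaux.K * ((⨆ t, |F n t - F₀ t|) / η n) := by
      rw [integral_const_mul, KDEaux.integral_abs_Dk u hηn]
      ring
    linarith
  -- difference tends to zero
  have hd0 : Tendsto (fun n => fn n u - conv n) atTop (𝓝 0) := by
    refine squeeze_zero_norm
      (a := fun n => KDEaux.K * ((⨆ t, |F n t - F₀ t|) / η n)) (fun n => ?_) ?_
    · rw [Real.norm_eq_abs]; exact hdiffbd n
    · have := hε.const_mul KDEaux.K
      simpa using this
  have hconvt : Tendsto conv atTop (𝓝 (f₀ u)) :=
    KDEaux.tendsto_conv f₀ hf₀nn M hf₀bdd hf₀int.aestronglyMeasurable η hηpos hη0 u hcont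
  have hfinal := hd0.add hconvt
  rw [zero_add] at hfinal
  refine hfinal.congr fun n => ?_
  ring
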